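/- arXiv:2304.02926 — 2 statements merged into one kernel-verified Lean document; each statement's English description precedes it below -/
import Mathlib

section
/- Let $S, M, B \in \mathbb{C}^{m\times m}$ be Hermitian matrices, $k_i$ real with $k_i \neq k_j$, $k_i \neq -k_j$, and $f_i$ complex, satisfying $S_{ij} - k_j^2 M_{ij} - \imath k_j B_{ij} = -2\imath k_j \overline{f_i}$ for all $i,j$. Then for $i \neq j$: $M_{ij} = \imath \left( \frac{B_{ij}}{k_i - k_j} - 2 \frac{k_i f_j + k_j \overline{f_i}}{k_i^2 - k_j^2} \right)$. -/
open Complex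

theorem stmt3 {m : ℕ} (S M B : Matrix (Fin m) (Fin m) ℂ)
    (hS : S.IsHermitian) (hM : M.IsHermitian) (hB : B.IsHermitian)
    (k : Fin m → ℝ) (f : Fin m → ℂ)
    (heq : ∀ i j, S i j - (k j : ℂ)^2 * M i j - I * (k j : ℂ) * B i j
      = -2 * I * (k j : ℂ) * (starRingEnd ℂ) (f i)) :
    ∀ i j, i ≠ j → k i ≠ k j → k i ≠ -(k j) →
      M i j = I * (B i j / ((k i : ℂ) - (k j : ℂ))
        - 2 * ((k i : ℂ) * f j + (k j : ℂ) * (starRingEnd ℂ) (f i))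
            / ((k i : ℂ)^2 - (k j : ℂ)^2)) := by
  intro i j hij hk hk'
  have e1 := heq i j
  have e2 := congrArg (starRingEnd ℂ) (heq j i)
  have hs : (starRingEnd ℂ) (S j i) = S i j := hS.apply i j
  have hm : (starRingEnd ℂ) (M j i) = M i j := hM.apply i j
  have hb : (starRingEnd ℂ) (B j i) = B i j := hB.apply i j
  simp only [map_sub, map_mul, map_pow, map_neg, Complex.conj_I,
    Complex.conj_ofReal, Complex.conj_conj, map_ofNat, hs, hm, hb] at e2
  have h1 : (k i : ℂ) - (k j : ℂ) ≠ 0 := by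
    intro h
    apply hk
    have := sub_eq_zero.mp h
    exact_mod_cast this
  have h2 : (k i : ℂ) + (k j : ℂ) ≠ 0 := by
    intro h
    apply hk'
    have : (k i : ℂ) = -(k j : ℂ) := by linear_combination h
    exact_mod_cast this
  have h3 : (k i : ℂ)^2 - (k j : ℂ)^2 ≠ 0 := by
    rw [sq_sub_sq]
    exact mul_ne_zero h2 h1
  field_simp
  linear_combination ((k i : ℂ) - (k j : ℂ)) * e1 - ((k i : ℂ) - (k j : ℂ)) * e2
end

section
/- Let $S, M, B \in \mathbb{C}^{m\times m}$ be Hermitian matrices, $k_i$ real with $k_i \neq k_j$ and $k_i \neq -k_j$ for $i \neq j$, and $f_i$ complex, satisfying $S_{ij} - k_j^2 M_{ij} - \imath k_j B_{ij} = -2\imath k_j \overline{f_i}$ for all $i,j$. Then for $i \neq j$: $S_{ij} = \imath \left( \frac{k_i k_j B_{ij}}{k_i - k_j} - 2 \frac{k_j^2 k_i f_j + k_i^2 k_j \overline{f_i}}{k_i^2 - k_j^2} \right)$. -/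
open Complex

theorem stmt4 {m : ℕ} (S M B : Matrix (Fin m) (Fin m) ℂ)
    (hS : S.IsHermitian) (hM : M.IsHermitian) (hB : B.IsHermitian)
    (k : Fin m → ℝ) (f : Fin m → ℂ)
    (heq : ∀ i j, S i j - (k j : ℂ)^2 * M i j - I * (k j : ℂ) * B i j
      = -2 * I * (k j : ℂ) * (starRingEnd ℂ) (f i)) :
    ∀ i j, i ≠ j → k i ≠ k j → k i ≠ -(k j) →
      S i j = I * ((k i : ℂ) * (k j : ℂ) * B i j / ((k i : ℂ) - (k j : ℂ))
        - 2 * ((k j : ℂ)^2 * (k i : ℂ) * f j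
            + (k i : ℂ)^2 * (k j : ℂ) * (starRingEnd ℂ) (f i))
            / ((k i : ℂ)^2 - (k j : ℂ)^2)) := by
  intro i j hij hk1 hk2
  have e1 := heq i j
  have e2 := congrArg (starRingEnd ℂ) (heq j i)
  simp only [map_sub, map_mul, map_pow, map_neg, map_ofNat, Complex.conj_I,
    Complex.conj_ofReal, Complex.conj_conj, Complex.conj_conj] at e2
  rw [show (starRingEnd ℂ) (S j i) = S i j from hS.apply i j,
    show (starRingEnd ℂ) (M j i) = M i j from hM.apply i j,
    show (starRingEnd ℂ) (B j i) = B i j from hB.apply i j] at e2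
  have hd1 : (k i : ℂ) - (k j : ℂ) ≠ 0 := by
    intro h
    apply hk1
    exact_mod_cast sub_eq_zero.mp h
  have hd2 : (k i : ℂ) + (k j : ℂ) ≠ 0 := by
    intro h
    apply hk2
    have : (k i : ℂ) = -(k j : ℂ) := by linear_combination h
    exact_mod_cast this
  have hd3 : (k i : ℂ)^2 - (k j : ℂ)^2 ≠ 0 := by
    rw [sq_sub_sq]; exact mul_ne_zero hd2 hd1
  field_simp
  linear_combination ((k i:ℂ) - (k j:ℂ)) * ((k i:ℂ)^2 * e1 - (k j:ℂ)^2 * e2)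
end
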